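/- (Unbounded solutions when ρ = 0.) Let β : [0,∞) → (0,∞) be continuous decreasing with f(x) := β(x)x decreasing on [x̄, ∞) for some x̄ > 0, and let ξ̄ > 1/2 with 2ξ̄ > 1. Suppose x : [0,∞) → (0,∞) is C¹ and satisfies x'(t) = 2ξ̄ f(x(t−r)) − f(x(t)) for t ≥ r, x(0) > x̄, and x'(t) > 0 for t ∈ [0,r]. Then x'(t) > 0 for all t ≥ 0 and x is unbounded (x does not converge to any finite limit). -/

import Mathlib

open Set Real Filter

/-- unbounded solutions when ρ = 0: with `f x = β x * x` decreasing on
`[x̄, ∞)`, `ξ̄ > 1/2`, a positive C¹ solution of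
`x'(t) = 2 ξ̄ f(x(t−r)) − f(x t)` for `t ≥ r` with `x 0 > x̄` and `x' > 0` on `[0,r]`
satisfies `x' > 0` on `[0,∞)` and converges to no finite limit. -/
theorem delay_equation_unbounded
    (β : ℝ → ℝ)
    (hβcont : ContinuousOn β (Ici 0))
    (hβpos : ∀ z ∈ Ici (0:ℝ), 0 < β z)
    (hβanti : AntitoneOn β (Ici 0))
    (hβlim : Tendsto β atTop (nhds 0))
    (f : ℝ → ℝ) (hf : ∀ z, f z = β z * z)
    (xbar : ℝ) (hxbar : 0 < xbar)
    (hfanti : AntitoneOn f (Ici xbar))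
    (ξ r : ℝ) (hξ : 1 / 2 < ξ) (hr : 0 < r)
    (x x' : ℝ → ℝ)
    (hxpos : ∀ t ≥ (0:ℝ), 0 < x t)
    (hderiv : ∀ t ≥ (0:ℝ), HasDerivAt x (x' t) t)
    (hx'cont : ContinuousOn x' (Ici 0))
    (hdde : ∀ t ≥ r, x' t = 2 * ξ * f (x (t - r)) - f (x t))
    (hx0 : xbar < x 0)
    (hinit : ∀ t ∈ Icc (0:ℝ) r, 0 < x' t) :
    (∀ t ≥ (0:ℝ), 0 < x' t) ∧ ¬ ∃ C : ℝ, Tendsto x atTop (nhds C) := by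
  have hxc : ContinuousOn x (Ici 0) := fun t ht =>
    (hderiv t ht).continuousAt.continuousWithinAt
  have hderiv_eq : ∀ t : ℝ, 0 ≤ t → deriv x t = x' t := fun t ht => (hderiv t ht).deriv
  -- Part 1: x' > 0 everywhere
  have hpos : ∀ t ≥ (0:ℝ), 0 < x' t := by
    by_contra h
    push_neg at h
    obtain ⟨t1, ht1, hle⟩ := h
    set S : Set ℝ := {t | r ≤ t ∧ x' t ≤ 0} with hSdef
    have ht1S : t1 ∈ S := by
      refine ⟨?_, hle⟩
      by_contra hlt
      push_neg at hlt
      exact absurd hle (not_le.mpr (hinit t1 ⟨ht1, hlt.le⟩))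
    have hSbdd : BddBelow S := ⟨r, fun t ht => ht.1⟩
    have hSclosed : IsClosed S := by
      have hEq : S = Ici r ∩ (Ici 0 ∩ x' ⁻¹' Iic 0) := by
        ext t
        simp only [hSdef, mem_setOf_eq, mem_inter_iff, mem_Ici, mem_preimage, mem_Iic]
        exact ⟨fun ⟨h1, h2⟩ => ⟨h1, le_trans hr.le h1, h2⟩, fun ⟨h1, _, h2⟩ => ⟨h1, h2⟩⟩
      rw [hEq]
      exact isClosed_Ici.inter (hx'cont.preimage_isClosed_of_isClosed isClosed_Ici isClosed_Iic)
    set t0 := sInf S with ht0def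
    have ht0S : t0 ∈ S := hSclosed.csInf_mem ⟨t1, ht1S⟩ hSbdd
    have ht0r : r ≤ t0 := ht0S.1
    have ht00 : (0:ℝ) ≤ t0 := le_trans hr.le ht0r
    have hpos' : ∀ t : ℝ, 0 ≤ t → t < t0 → 0 < x' t := by
      intro t ht htlt
      rcases le_or_gt t r with h | h
      · exact hinit t ⟨ht, h⟩
      · by_contra hc
        push_neg at hc
        exact absurd (csInf_le hSbdd ⟨h.le, hc⟩) (not_le.mpr htlt)
    have hmono : StrictMonoOn x (Icc 0 t0) := by
      apply strictMonoOn_of_deriv_pos (convex_Icc 0 t0) (hxc.mono Icc_subset_Ici_self)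
      intro t ht
      rw [interior_Icc] at ht
      rw [hderiv_eq t ht.1.le]
      exact hpos' t ht.1.le ht.2
    have h1 : x (t0 - r) < x t0 :=
      hmono ⟨by linarith, by linarith⟩ ⟨ht00, le_refl _⟩ (by linarith)
    have h2 : xbar < x (t0 - r) := by
      rcases eq_or_lt_of_le (show (0:ℝ) ≤ t0 - r by linarith) with h | h
      · rw [← h]; exact hx0
      · exact lt_trans hx0 (hmono ⟨le_refl _, ht00⟩ ⟨by linarith, by linarith⟩ h)
    have hfle : f (x t0) ≤ f (x (t0 - r)) :=
      hfanti (mem_Ici.mpr h2.le) (mem_Ici.mpr (by linarith)) h1.le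
    have hfxpos : 0 < f (x t0) := by
      rw [hf]
      exact mul_pos (hβpos _ (mem_Ici.mpr (hxpos t0 ht00).le)) (hxpos t0 ht00)
    have hdde0 := hdde t0 ht0r
    have hx'le := ht0S.2
    nlinarith
  refine ⟨hpos, ?_⟩
  rintro ⟨C, hC⟩
  have hmono : StrictMonoOn x (Ici 0) := by
    apply strictMonoOn_of_deriv_pos (convex_Ici 0) hxc
    intro t ht
    rw [interior_Ici] at ht
    rw [hderiv_eq t ht.le]
    exact hpos t ht.le
  have hC0 : x 0 ≤ C := by
    apply ge_of_tendsto hC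
    filter_upwards [eventually_ge_atTop (0:ℝ)] with t ht
    rcases eq_or_lt_of_le ht with h | h
    · rw [← h]
    · exact (hmono (mem_Ici.mpr le_rfl) (mem_Ici.mpr ht) h).le
  have hCpos : 0 < C := lt_of_lt_of_le (hxpos 0 le_rfl) hC0
  have hfc : ContinuousOn f (Ici 0) := by
    have hfe : f = fun z => β z * z := funext hf
    rw [hfe]
    exact hβcont.mul continuousOn_id
  have hxrC : Tendsto (fun t => x (t - r)) atTop (nhds C) := by
    have h := hC.comp (tendsto_atTop_add_const_right atTop (-r) tendsto_id)
    simpa [Function.comp_def, sub_eq_add_neg] using h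
  have hxin : ∀ᶠ t in atTop, x t ∈ Ici (0:ℝ) := by
    filter_upwards [eventually_ge_atTop (0:ℝ)] with t ht using mem_Ici.mpr (hxpos t ht).le
  have hxrin : ∀ᶠ t in atTop, x (t - r) ∈ Ici (0:ℝ) := by
    filter_upwards [eventually_ge_atTop r] with t ht
    exact mem_Ici.mpr (hxpos (t - r) (by linarith)).le
  have hfxC : Tendsto (fun t => f (x t)) atTop (nhds (f C)) :=
    ((hfc C (mem_Ici.mpr hCpos.le)).tendsto).comp
      (tendsto_nhdsWithin_of_tendsto_nhds_of_eventually_within _ hC hxin)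
  have hfxrC : Tendsto (fun t => f (x (t - r))) atTop (nhds (f C)) :=
    ((hfc C (mem_Ici.mpr hCpos.le)).tendsto).comp
      (tendsto_nhdsWithin_of_tendsto_nhds_of_eventually_within _ hxrC hxrin)
  have hfCpos : 0 < f C := by
    rw [hf]; exact mul_pos (hβpos C (mem_Ici.mpr hCpos.le)) hCpos
  set L := (2 * ξ - 1) * f C with hLdef
  have hLpos : 0 < L := mul_pos (by linarith) hfCpos
  have hx'lim : Tendsto x' atTop (nhds L) := by
    have h1 : Tendsto (fun t => 2 * ξ * f (x (t - r)) - f (x t)) atTop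
        (nhds (2 * ξ * f C - f C)) := (hfxrC.const_mul (2 * ξ)).sub hfxC
    have h2 : 2 * ξ * f C - f C = L := by rw [hLdef]; ring
    rw [h2] at h1
    apply h1.congr'
    filter_upwards [eventually_ge_atTop r] with t ht
    exact (hdde t ht).symm
  have hev : ∀ᶠ t in atTop, L / 2 < x' t :=
    hx'lim.eventually (eventually_gt_nhds (by linarith))
  obtain ⟨T0, hT0⟩ := eventually_atTop.mp hev
  set T := max T0 r with hTdef
  have hT0' : (0:ℝ) ≤ T := le_trans hr.le (le_max_right _ _)
  have hT : ∀ t ≥ T, L / 2 < x' t := fun t ht => hT0 t (le_trans (le_max_left _ _) ht)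
  set g : ℝ → ℝ := fun t => x t - L / 2 * t with hgdef
  have hgderiv : ∀ t : ℝ, 0 ≤ t → HasDerivAt g (x' t - L / 2) t := by
    intro t ht
    have h2 : HasDerivAt (fun s : ℝ => L / 2 * s) (L / 2) t := by
      simpa using (hasDerivAt_id t).const_mul (L / 2)
    exact (hderiv t ht).sub h2
  have hgmono : MonotoneOn g (Ici T) := by
    apply monotoneOn_of_deriv_nonneg (convex_Ici T)
    · intro t ht
      exact ((hgderiv t (le_trans hT0' ht)).continuousAt).continuousWithinAt
    · intro t ht
      rw [interior_Ici] at ht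
      exact ((hgderiv t (le_trans hT0' ht.le)).differentiableAt).differentiableWithinAt
    · intro t ht
      rw [interior_Ici] at ht
      rw [(hgderiv t (le_trans hT0' ht.le)).deriv]
      have := hT t ht.le
      linarith
  have hgrow : ∀ t ≥ T, x T + L / 2 * (t - T) ≤ x t := by
    intro t ht
    have := hgmono (mem_Ici.mpr le_rfl) (mem_Ici.mpr ht) ht
    simp only [hgdef] at this
    linarith
  have htop : Tendsto x atTop atTop := by
    apply tendsto_atTop_mono' atTop (by filter_upwards [eventually_ge_atTop T] with t ht using hgrow t ht)
    apply tendsto_atTop_add_const_left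
    apply Tendsto.const_mul_atTop (by linarith : (0:ℝ) < L / 2)
    exact tendsto_atTop_add_const_right atTop (-T) tendsto_id |>.congr (fun t => by simp [id]; ring)
  exact not_tendsto_atTop_of_tendsto_nhds hC htop
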